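/- Let B = {X ∈ ℝ³ : ‖X‖ < r} (r > 0) carry the quadratic response W(X,F) = f(‖X‖²) • (F Fᵀ − 1), where f : ℝ → ℝ is continuously differentiable, and let X₀ ∈ B be a point with f'(‖X₀‖²) ≠ 0. Then there exists an open neighbourhood U ⊆ ℝ of ‖X₀‖² such that for all X, Y ∈ B with ‖X‖² ∈ U and ‖Y‖² ∈ U, the points X and Y are materially isomorphic if and only if ‖X‖ = ‖Y‖. -/
import Mathlib


open Matrix

/-- `F ∈ GL(3,ℝ)` is a material isomorphism from `X` to `Y` for the
mechanical response `W`: `W (X, G * F) = W (Y, G)` for every `G ∈ GL(3,ℝ)`. -/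
def IsMatIso {V : Type*} (W : EuclideanSpace ℝ (Fin 3) → GL (Fin 3) ℝ → V)
    (X Y : EuclideanSpace ℝ (Fin 3)) (F : GL (Fin 3) ℝ) : Prop :=
  ∀ G : GL (Fin 3) ℝ, W X (G * F) = W Y G

/-- The quadratic mechanical response `W(X,F) = f(‖X‖²) • (F Fᵀ − 1)`. -/
noncomputable def Wq (f : ℝ → ℝ) (X : EuclideanSpace ℝ (Fin 3)) (F : GL (Fin 3) ℝ) :
    Matrix (Fin 3) (Fin 3) ℝ :=
  f (‖X‖ ^ 2) • ((F : Matrix (Fin 3) (Fin 3) ℝ) * (F : Matrix (Fin 3) (Fin 3) ℝ)ᵀ - 1)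

lemma aux_injOn (f : ℝ → ℝ) (hf : ContDiff ℝ 1 f) (a : ℝ) (hd : deriv f a ≠ 0) :
    ∃ U : Set ℝ, IsOpen U ∧ a ∈ U ∧ Set.InjOn f U := by
  have hc : Continuous (deriv f) := hf.continuous_deriv le_rfl
  rcases hd.lt_or_gt with h | h
  · have hV : IsOpen {t | deriv f t < 0} := isOpen_lt hc continuous_const
    rcases Metric.isOpen_iff.1 hV a h with ⟨ε, hε, hball⟩
    refine ⟨Metric.ball a ε, Metric.isOpen_ball, Metric.mem_ball_self hε, ?_⟩
    have : StrictAntiOn f (Metric.ball a ε) := by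
      apply strictAntiOn_of_deriv_neg (convex_ball a ε) hf.continuous.continuousOn
      intro x hx
      exact hball (by simpa using interior_subset hx)
    exact this.injOn
  · have hV : IsOpen {t | 0 < deriv f t} := isOpen_lt continuous_const hc
    rcases Metric.isOpen_iff.1 hV a h with ⟨ε, hε, hball⟩
    refine ⟨Metric.ball a ε, Metric.isOpen_ball, Metric.mem_ball_self hε, ?_⟩
    have : StrictMonoOn f (Metric.ball a ε) := by
      apply strictMonoOn_of_deriv_pos (convex_ball a ε) hf.continuous.continuousOn
      intro x hx
      exact hball (by simpa using interior_subset hx)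
    exact this.injOn

noncomputable def twoGL : GL (Fin 3) ℝ :=
  ⟨(2:ℝ) • 1, (2⁻¹:ℝ) • 1,
    by simp [Matrix.smul_mul, Matrix.mul_smul, smul_smul],
    by simp [Matrix.smul_mul, Matrix.mul_smul, smul_smul]⟩

lemma aux_key (c : ℝ) :
    c • ((2:ℝ) • (1 : Matrix (Fin 3) (Fin 3) ℝ) * ((2:ℝ) • (1 : Matrix (Fin 3) (Fin 3) ℝ))ᵀ - 1)
      = (3 * c) • (1 : Matrix (Fin 3) (Fin 3) ℝ) := by
  ext i j
  simp [Matrix.transpose_smul, Matrix.smul_mul, Matrix.mul_smul, Matrix.smul_apply,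
    Matrix.sub_apply, Matrix.one_apply]
  split_ifs <;> ring

/-- If `f` is continuously differentiable and `f'(‖X₀‖²) ≠ 0`, then on a
neighbourhood `U` of `‖X₀‖²`, points of the ball whose squared norms lie in `U`
are materially isomorphic iff they have the same norm. -/
theorem matIso_quadratic_local (r : ℝ) (hr : 0 < r) (f : ℝ → ℝ)
    (hf : ContDiff ℝ 1 f)
    (X₀ : EuclideanSpace ℝ (Fin 3)) (hX₀ : ‖X₀‖ < r)
    (hd : deriv f (‖X₀‖ ^ 2) ≠ 0) :
    ∃ U : Set ℝ, IsOpen U ∧ ‖X₀‖ ^ 2 ∈ U ∧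
      ∀ X Y : EuclideanSpace ℝ (Fin 3), ‖X‖ < r → ‖Y‖ < r →
        ‖X‖ ^ 2 ∈ U → ‖Y‖ ^ 2 ∈ U →
          ((∃ F : GL (Fin 3) ℝ, IsMatIso (Wq f) X Y F) ↔ ‖X‖ = ‖Y‖) := by
  obtain ⟨U, hUopen, hUmem, hUinj⟩ := aux_injOn f hf _ hd
  refine ⟨U, hUopen, hUmem, ?_⟩
  intro X Y hXr hYr hXU hYU
  constructor
  · rintro ⟨F, hF⟩
    -- key: squared norms equal
    have hsq : ‖X‖ ^ 2 = ‖Y‖ ^ 2 := by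
      apply hUinj hXU hYU
      -- first: from G = 1, f(‖X‖²) • (FFᵀ - 1) = 0
      have h1 := hF 1
      simp only [one_mul, Wq] at h1
      have h1' : f (‖X‖ ^ 2) • ((F : Matrix (Fin 3) (Fin 3) ℝ) * (F : Matrix (Fin 3) (Fin 3) ℝ)ᵀ - 1) = 0 := by
        rw [h1]; simp
      -- value of Wq at twoGL for any point Z
      have hW2 : ∀ Z : EuclideanSpace ℝ (Fin 3),
          Wq f Z twoGL = (3 * f (‖Z‖ ^ 2)) • (1 : Matrix (Fin 3) (Fin 3) ℝ) := by
        intro Z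
        simp only [Wq, twoGL]
        exact aux_key _
      rcases eq_or_ne (f (‖X‖ ^ 2)) 0 with hfa | hfa
      · -- Wq f X anything = 0, so f(‖Y‖²) = 0 too
        have h2 := hF twoGL
        have hL : Wq f X (twoGL * F) = 0 := by
          simp only [Wq, hfa, zero_smul]
        rw [hL] at h2
        have h2' := (hW2 Y).symm.trans h2.symm
        have h3 : (3 * f (‖Y‖ ^ 2)) = 0 := by
          have := congrFun (congrFun h2' 0) 0
          simpa [Matrix.smul_apply, Matrix.one_apply] using this
        have : f (‖Y‖ ^ 2) = 0 := by linarith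
        rw [hfa, this]
      · -- F Fᵀ = 1
        have hFFt : (F : Matrix (Fin 3) (Fin 3) ℝ) * (F : Matrix (Fin 3) (Fin 3) ℝ)ᵀ = 1 := by
          rcases smul_eq_zero.1 h1' with h | h
          · exact absurd h hfa
          · exact sub_eq_zero.1 h
        have h2 := hF twoGL
        have hL : Wq f X (twoGL * F) = (3 * f (‖X‖ ^ 2)) • (1 : Matrix (Fin 3) (Fin 3) ℝ) := by
          simp only [Wq, Units.val_mul]
          rw [Matrix.transpose_mul, show ((twoGL : GL (Fin 3) ℝ) : Matrix (Fin 3) (Fin 3) ℝ) = (2:ℝ) • 1 from rfl]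
          rw [Matrix.mul_assoc, ← Matrix.mul_assoc (F : Matrix (Fin 3) (Fin 3) ℝ), hFFt,
            Matrix.one_mul]
          exact aux_key _
        rw [hL, hW2 Y] at h2
        have h3 : 3 * f (‖X‖ ^ 2) = 3 * f (‖Y‖ ^ 2) := by
          have := congrFun (congrFun h2 0) 0
          simpa [Matrix.smul_apply, Matrix.one_apply] using this
        linarith
    have := congrArg Real.sqrt hsq
    rwa [Real.sqrt_sq (norm_nonneg X), Real.sqrt_sq (norm_nonneg Y)] at this
  · intro hXY
    refine ⟨1, fun G => ?_⟩
    simp only [mul_one, Wq, hXY]
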